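/- Let X ⊆ ℝⁿ be a nonempty convex compact set with κ = max_{x∈X} ‖x‖₂ > 0 and C = cone({κ} × X) ⊆ ℝ^{n+1}. Let positive payoff weights (ω_t) and positive decision weights (θ_t) satisfy θ_{t+1}/θ_t ≥ ω_{t+1}/ω_t for all t ≥ 1. Let losses f_t ∈ ℝⁿ with ‖f_t‖₂ ≤ L and decisions x_t ∈ X for t = 1,…,T, with v_t = (⟨f_t, x_t⟩/κ, −f_t), CBA⁺ iterates u_0 = 0 and u_t = π_C(u_{t−1} + ω_t v_t), and the CBA⁺ choice rule: for every t there exists β_t ≥ 0 with u_{t−1} = β_t · (κ, x_t). Then (∑_{t=1}^T θ_t ⟨f_t, x_t⟩ − inf_{x∈X} ∑_{t=1}^T θ_t ⟨f_t, x⟩) / (∑_{t=1}^T θ_t) ≤ 2 κ L (θ_T/ω_T) √(∑_{t=1}^T ω_t²) / (∑_{t=1}^T θ_t). -/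

import Mathlib

set_option autoImplicit false

open scoped RealInnerProductSpace
open Finset

noncomputable section

/-- The lifted vector `(t, y) ∈ ℝ × ℝⁿ = ℝ^{n+1}`. -/
def pr {n : ℕ} (t : ℝ) (y : EuclideanSpace ℝ (Fin n)) :
    EuclideanSpace ℝ (Fin (n + 1)) :=
  WithLp.toLp 2 (Fin.cons t (fun i => y i) : Fin (n + 1) → ℝ)

/-- The conic hull `cone({κ} × X) = {α • (κ, x) : α ≥ 0, x ∈ X}`. -/
def coneLift {n : ℕ} (κ : ℝ) (X : Set (EuclideanSpace ℝ (Fin n))) :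
    Set (EuclideanSpace ℝ (Fin (n + 1))) :=
  {u | ∃ α : ℝ, 0 ≤ α ∧ ∃ x ∈ X, u = α • pr κ x}

/-- The polar cone `C° = {z : ⟨z, w⟩ ≤ 0 ∀ w ∈ C}`. -/
def polarCone {E : Type*} [NormedAddCommGroup E] [InnerProductSpace ℝ E]
    (C : Set E) : Set E :=
  {z | ∀ w ∈ C, ⟪z, w⟫ ≤ 0}

/-- `p` is the Euclidean orthogonal projection of `u` onto the set `S`. -/
def IsProjOn {E : Type*} [NormedAddCommGroup E] [InnerProductSpace ℝ E]
    (u : E) (S : Set E) (p : E) : Prop :=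
  p ∈ S ∧ ∀ z ∈ S, dist u p ≤ dist u z

lemma inner_pr {n : ℕ} (s t : ℝ) (y z : EuclideanSpace ℝ (Fin n)) :
    ⟪pr s y, pr t z⟫ = s * t + ⟪y, z⟫ := by
  simp [pr, PiLp.inner_apply, RCLike.inner_apply, Fin.sum_univ_succ]
  ring

lemma pr_add {n : ℕ} (s t : ℝ) (y z : EuclideanSpace ℝ (Fin n)) :
    pr s y + pr t z = pr (s + t) (y + z) := by
  ext i; induction i using Fin.cases <;> simp [pr]

lemma pr_smul {n : ℕ} (c s : ℝ) (y : EuclideanSpace ℝ (Fin n)) :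
    c • pr s y = pr (c * s) (c • y) := by
  ext i; induction i using Fin.cases <;> simp [pr]

lemma norm_pr_sq {n : ℕ} (s : ℝ) (y : EuclideanSpace ℝ (Fin n)) :
    ‖pr s y‖ ^ 2 = s ^ 2 + ‖y‖ ^ 2 := by
  rw [← real_inner_self_eq_norm_sq, ← real_inner_self_eq_norm_sq, inner_pr]
  ring

lemma zero_mem_coneLift {n : ℕ} {κ : ℝ} {X : Set (EuclideanSpace ℝ (Fin n))}
    (hXne : X.Nonempty) : 0 ∈ coneLift κ X := by
  obtain ⟨x0, hx0⟩ := hXne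
  exact ⟨0, le_refl 0, x0, hx0, by simp⟩

lemma smul_mem_coneLift {n : ℕ} {κ : ℝ} {X : Set (EuclideanSpace ℝ (Fin n))}
    {c : ℝ} (hc : 0 ≤ c) {w : EuclideanSpace ℝ (Fin (n + 1))}
    (hw : w ∈ coneLift κ X) : c • w ∈ coneLift κ X := by
  obtain ⟨α, hα, x, hx, rfl⟩ := hw
  exact ⟨c * α, mul_nonneg hc hα, x, hx, by rw [smul_smul]⟩

lemma convex_coneLift {n : ℕ} {κ : ℝ} {X : Set (EuclideanSpace ℝ (Fin n))}
    (hXcv : Convex ℝ X) : Convex ℝ (coneLift κ X) := by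
  rintro u ⟨α, hα, x1, hx1, rfl⟩ w ⟨β, hβ, x2, hx2, rfl⟩ a b ha hb hab
  set c := a * α + b * β with hc
  have hcnn : 0 ≤ c := add_nonneg (mul_nonneg ha hα) (mul_nonneg hb hβ)
  rcases eq_or_lt_of_le hcnn with hc0 | hcpos
  · have h1 : a * α = 0 := by nlinarith [mul_nonneg ha hα, mul_nonneg hb hβ]
    have h2 : b * β = 0 := by nlinarith [mul_nonneg ha hα, mul_nonneg hb hβ]
    refine ⟨0, le_refl 0, x1, hx1, ?_⟩
    rw [smul_smul, smul_smul, h1, h2]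
    simp
  · refine ⟨c, hcnn, (a * α / c) • x1 + (b * β / c) • x2,
      hXcv hx1 hx2 (div_nonneg (mul_nonneg ha hα) hcnn)
        (div_nonneg (mul_nonneg hb hβ) hcnn) (by field_simp; linarith), ?_⟩
    rw [smul_smul, smul_smul, pr_smul, pr_smul, pr_add, pr_smul]
    have e1 : a * α * κ + b * β * κ = c * κ := by rw [hc]; ring
    have e2 : (a * α) • x1 + (b * β) • x2
        = c • ((a * α / c) • x1 + (b * β / c) • x2) := by
      rw [smul_add, smul_smul, smul_smul]
      have hcne : c ≠ 0 := ne_of_gt hcpos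
      congr 2 <;> field_simp
    rw [e1, e2]

lemma proj_polar {E : Type*} [NormedAddCommGroup E] [InnerProductSpace ℝ E]
    {C : Set E} (hCv : Convex ℝ C) (h0 : 0 ∈ C)
    (hsm : ∀ c : ℝ, 0 ≤ c → ∀ z ∈ C, c • z ∈ C)
    {w p : E} (h : IsProjOn w C p) :
    (∀ z ∈ C, ⟪w - p, z⟫ ≤ 0) ∧ ⟪w - p, p⟫ = 0 := by
  have : Nonempty C := ⟨⟨0, h0⟩⟩
  have hmin : ‖w - p‖ = ⨅ z : C, ‖w - z‖ := by
    refine le_antisymm (le_ciInf fun z => ?_)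
      (ciInf_le (f := fun z : C => ‖w - z‖) ⟨(0 : ℝ), by rintro _ ⟨z, rfl⟩; exact norm_nonneg _⟩ ⟨p, h.1⟩)
    rw [← dist_eq_norm, ← dist_eq_norm]; exact h.2 z z.2
  have VI := (norm_eq_iInf_iff_real_inner_le_zero hCv h.1).mp hmin
  have horth : ⟪w - p, p⟫ = 0 := by
    have h1 := VI 0 h0
    have h2 := VI ((2 : ℝ) • p) (hsm 2 (by norm_num) p h.1)
    rw [zero_sub, inner_neg_right] at h1
    rw [two_smul, add_sub_cancel_right] at h2
    linarith
  refine ⟨fun z hz => ?_, horth⟩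
  have := VI z hz
  rw [inner_sub_right] at this
  linarith

set_option maxHeartbeats 1000000 in
/-- Theorem 3: CBA⁺ with payoff weights `ω_t` and decision weights
`θ_t` satisfying `θ_{t+1}/θ_t ≥ ω_{t+1}/ω_t` has weighted average regret at most
`2 κ L (θ_T/ω_T) √(∑ ω_t²) / (∑ θ_t)`. -/
theorem stmt8 {n : ℕ} (X : Set (EuclideanSpace ℝ (Fin n)))
    (hXne : X.Nonempty) (hXcv : Convex ℝ X) (hXcp : IsCompact X)
    (κ : ℝ) (hκ : IsGreatest ((fun x => ‖x‖) '' X) κ) (hκpos : 0 < κ)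
    (T : ℕ) (hT : 1 ≤ T)
    (ω θ : ℕ → ℝ) (hω : ∀ t ≥ 1, 0 < ω t) (hθ : ∀ t ≥ 1, 0 < θ t)
    (hrat : ∀ t ≥ 1, ω (t + 1) / ω t ≤ θ (t + 1) / θ t)
    (f x : ℕ → EuclideanSpace ℝ (Fin n)) (hx : ∀ t ∈ Icc 1 T, x t ∈ X)
    (L : ℝ) (hL : ∀ t ∈ Icc 1 T, ‖f t‖ ≤ L)
    (v : ℕ → EuclideanSpace ℝ (Fin (n + 1)))
    (hv : ∀ t, v t = pr (⟪f t, x t⟫ / κ) (-(f t)))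
    (u : ℕ → EuclideanSpace ℝ (Fin (n + 1))) (hu0 : u 0 = 0)
    (hu : ∀ t ∈ Icc 1 T, IsProjOn (u (t - 1) + ω t • v t) (coneLift κ X) (u t))
    (hchoice : ∀ t ∈ Icc 1 T, ∃ β : ℝ, 0 ≤ β ∧ u (t - 1) = β • pr κ (x t)) :
    ((∑ t ∈ Icc 1 T, θ t * ⟪f t, x t⟫)
          - ⨅ xx : X, ∑ t ∈ Icc 1 T, θ t * ⟪f t, (xx : EuclideanSpace ℝ (Fin n))⟫)
        / (∑ t ∈ Icc 1 T, θ t)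
      ≤ 2 * κ * L * (θ T / ω T) * Real.sqrt (∑ t ∈ Icc 1 T, ω t ^ 2)
        / (∑ t ∈ Icc 1 T, θ t) := by
  have hκne : κ ≠ 0 := ne_of_gt hκpos
  set C := coneLift κ X with hCdef
  have hC0 : (0 : EuclideanSpace ℝ (Fin (n + 1))) ∈ C := zero_mem_coneLift hXne
  have hCcv : Convex ℝ C := convex_coneLift hXcv
  have hCsm : ∀ c : ℝ, 0 ≤ c → ∀ z ∈ C, c • z ∈ C := fun c hc z hz => smul_mem_coneLift hc hz
  have hLnn : 0 ≤ L := le_trans (norm_nonneg _) (hL 1 (mem_Icc.mpr ⟨le_refl 1, hT⟩))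
  have hxκ : ∀ y ∈ X, ‖y‖ ≤ κ := fun y hy => hκ.2 ⟨y, hy, rfl⟩
  have hprC : ∀ y ∈ X, pr κ y ∈ C := fun y hy => ⟨1, zero_le_one, y, hy, (one_smul ℝ _).symm⟩
  have hCpos : ∀ z ∈ C, ∀ y ∈ X, 0 ≤ ⟪z, pr κ y⟫ := by
    rintro z ⟨α, hα, x', hx', rfl⟩ y hy
    rw [real_inner_smul_left, inner_pr]
    have h1 : |⟪x', y⟫| ≤ κ * κ :=
      le_trans (abs_real_inner_le_norm _ _)
        (mul_le_mul (hxκ _ hx') (hxκ _ hy) (norm_nonneg _) hκpos.le)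
    have h2 := abs_le.mp h1
    nlinarith
  -- polar facts per step
  have hpol : ∀ t, 1 ≤ t → t ≤ T →
      (∀ z ∈ C, ⟪u (t - 1) + ω t • v t - u t, z⟫ ≤ 0) ∧
        ⟪u (t - 1) + ω t • v t - u t, u t⟫ = 0 := fun t h1 h2 =>
    proj_polar hCcv hC0 hCsm (hu t (mem_Icc.mpr ⟨h1, h2⟩))
  have huC : ∀ t, 1 ≤ t → t ≤ T → u t ∈ C := fun t h1 h2 => (hu t (mem_Icc.mpr ⟨h1, h2⟩)).1
  -- orthogonality from choice rule
  have hvu : ∀ t, 1 ≤ t → t ≤ T → ⟪u (t - 1), v t⟫ = 0 := by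
    intro t h1 h2
    obtain ⟨β, hβ, heq⟩ := hchoice t (mem_Icc.mpr ⟨h1, h2⟩)
    rw [heq, hv, real_inner_smul_left, inner_pr, inner_neg_right]
    rw [mul_comm κ (⟪f t, x t⟫ / κ), div_mul_cancel₀ _ hκne,
      real_inner_comm (x t) (f t)]
    ring
  -- norm bound on v
  have hvnorm : ∀ t, 1 ≤ t → t ≤ T → ‖v t‖ ^ 2 ≤ 2 * L ^ 2 := by
    intro t h1 h2
    rw [hv, norm_pr_sq, norm_neg]
    have hft : ‖f t‖ ≤ L := hL t (mem_Icc.mpr ⟨h1, h2⟩)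
    have hxt : ‖x t‖ ≤ κ := hxκ _ (hx t (mem_Icc.mpr ⟨h1, h2⟩))
    have habs : |⟪f t, x t⟫| ≤ L * κ :=
      le_trans (abs_real_inner_le_norm _ _)
        (mul_le_mul hft hxt (norm_nonneg _) hLnn)
    have h2 := abs_le.mp habs
    have hk2 : (0 : ℝ) < κ ^ 2 := by positivity
    have hdiv : (⟪f t, x t⟫ / κ) ^ 2 ≤ L ^ 2 := by
      rw [div_pow, div_le_iff₀ hk2]
      nlinarith
    nlinarith [norm_nonneg (f t)]
  -- one-step norm recursion
  have hstepnorm : ∀ t, 1 ≤ t → t ≤ T →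
      ‖u t‖ ^ 2 ≤ ‖u (t - 1)‖ ^ 2 + ω t ^ 2 * (2 * L ^ 2) := by
    intro t h1 h2
    set w := u (t - 1) + ω t • v t with hwdef
    have hw1 : ‖w‖ ^ 2 = ‖u (t - 1)‖ ^ 2 + ω t ^ 2 * ‖v t‖ ^ 2 := by
      rw [hwdef, norm_add_sq_real, real_inner_smul_right, hvu t h1 h2, norm_smul]
      simp [mul_pow, sq_abs]
    have hw2 : ‖u t‖ ^ 2 ≤ ‖w‖ ^ 2 := by
      have : w = u t + (w - u t) := by abel
      rw [this, norm_add_sq_real]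
      have horth : ⟪u t, w - u t⟫ = 0 := by
        rw [real_inner_comm]; exact (hpol t h1 h2).2
      rw [horth]
      nlinarith [sq_nonneg ‖w - u t‖]
    have hv2 : ω t ^ 2 * ‖v t‖ ^ 2 ≤ ω t ^ 2 * (2 * L ^ 2) :=
      mul_le_mul_of_nonneg_left (hvnorm t h1 h2) (sq_nonneg _)
    linarith [hw1 ▸ hw2]
  -- cumulative norm bound
  have hcum : ∀ m, m ≤ T → ‖u m‖ ^ 2 ≤ 2 * L ^ 2 * ∑ t ∈ Icc 1 m, ω t ^ 2 := by
    intro m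
    induction m with
    | zero => intro _; simp [hu0]
    | succ k ih =>
      intro hk
      have hk' : k ≤ T := le_trans (Nat.le_succ k) hk
      have hsum : ∑ t ∈ Icc 1 (k + 1), ω t ^ 2
          = (∑ t ∈ Icc 1 k, ω t ^ 2) + ω (k + 1) ^ 2 :=
        Finset.sum_Icc_succ_top (Nat.succ_le_succ (Nat.zero_le k)) _
      have h1 := hstepnorm (k + 1) (Nat.succ_le_succ (Nat.zero_le k)) hk
      simp only [Nat.add_sub_cancel] at h1
      have := ih hk'
      rw [hsum]
      nlinarith
  -- key per-comparator regret bound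
  have hSnn : 0 ≤ ∑ t ∈ Icc 1 T, ω t ^ 2 := Finset.sum_nonneg fun t _ => sq_nonneg _
  have key : ∀ y ∈ X,
      (∑ t ∈ Icc 1 T, θ t * ⟪f t, x t⟫) - (∑ t ∈ Icc 1 T, θ t * ⟪f t, y⟫)
        ≤ 2 * κ * L * (θ T / ω T) * Real.sqrt (∑ t ∈ Icc 1 T, ω t ^ 2) := by
    intro y hy
    have hpC : pr κ y ∈ C := hprC y hy
    -- per-step inequality
    have hstep : ∀ t, 1 ≤ t → t ≤ T →
        θ t * (⟪f t, x t⟫ - ⟪f t, y⟫)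
          ≤ θ t / ω t * (⟪u t, pr κ y⟫ - ⟪u (t - 1), pr κ y⟫) := by
      intro t h1 h2
      have hωt : 0 < ω t := hω t h1
      have hθt : 0 < θ t := hθ t h1
      have hvp : ⟪v t, pr κ y⟫ = ⟪f t, x t⟫ - ⟪f t, y⟫ := by
        rw [hv, inner_pr, inner_neg_left, div_mul_cancel₀ _ hκne]
        ring
      have hsplit : ω t * ⟪v t, pr κ y⟫
          = (⟪u t, pr κ y⟫ - ⟪u (t - 1), pr κ y⟫)
            + ⟪u (t - 1) + ω t • v t - u t, pr κ y⟫ := by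
        rw [inner_sub_left, inner_add_left, real_inner_smul_left]
        ring
      have hneg := (hpol t h1 h2).1 _ hpC
      have hωle : ω t * (⟪f t, x t⟫ - ⟪f t, y⟫)
          ≤ ⟪u t, pr κ y⟫ - ⟪u (t - 1), pr κ y⟫ := by
        rw [← hvp]; linarith [hsplit]
      have := mul_le_mul_of_nonneg_left hωle (le_of_lt (div_pos hθt hωt))
      calc θ t * (⟪f t, x t⟫ - ⟪f t, y⟫)
          = θ t / ω t * (ω t * (⟪f t, x t⟫ - ⟪f t, y⟫)) := by
            field_simp
        _ ≤ θ t / ω t * (⟪u t, pr κ y⟫ - ⟪u (t - 1), pr κ y⟫) := this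
    -- Abel summation induction
    have habel : ∀ m, 1 ≤ m → m ≤ T →
        ∑ t ∈ Icc 1 m, θ t * (⟪f t, x t⟫ - ⟪f t, y⟫)
          ≤ θ m / ω m * ⟪u m, pr κ y⟫ := by
      intro m hm
      induction m, hm using Nat.le_induction with
      | base =>
        intro h1T
        rw [Finset.Icc_self, Finset.sum_singleton]
        have := hstep 1 (le_refl 1) h1T
        simpa [hu0] using this
      | succ k hk ih =>
        intro hkT
        have hk' : k ≤ T := le_trans (Nat.le_succ k) hkT
        have hIH := ih hk'
        have hnew := hstep (k + 1) (Nat.succ_le_succ (Nat.zero_le k)) hkT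
        simp only [Nat.add_sub_cancel] at hnew
        rw [Finset.sum_Icc_succ_top (Nat.succ_le_succ (Nat.zero_le k))]
        have hφk : 0 ≤ ⟪u k, pr κ y⟫ := hCpos _ (huC k hk hk') y hy
        have hmono : θ k / ω k ≤ θ (k + 1) / ω (k + 1) := by
          have hr := hrat k hk
          have hωk := hω k hk
          have hωk1 := hω (k + 1) (Nat.succ_le_succ (Nat.zero_le k))
          have hθk := hθ k hk
          have hθk1 := hθ (k + 1) (Nat.succ_le_succ (Nat.zero_le k))
          rw [div_le_div_iff₀ hωk hωk1]
          rw [div_le_div_iff₀ hωk hθk] at hr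
          nlinarith
        nlinarith [mul_le_mul_of_nonneg_right hmono hφk]
    have hfinal := habel T hT (le_refl T)
    -- bound the RHS
    have hlamnn : 0 ≤ θ T / ω T := le_of_lt (div_pos (hθ T hT) (hω T hT))
    have huT : ‖u T‖ ≤ Real.sqrt (2 * L ^ 2 * ∑ t ∈ Icc 1 T, ω t ^ 2) := by
      have := Real.sqrt_le_sqrt (hcum T (le_refl T))
      rwa [Real.sqrt_sq (norm_nonneg _)] at this
    have hpnorm : ‖pr κ y‖ ≤ Real.sqrt (2 * κ ^ 2) := by
      have h1 : ‖pr κ y‖ ^ 2 ≤ 2 * κ ^ 2 := by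
        rw [norm_pr_sq]
        have := hxκ y hy
        nlinarith [norm_nonneg y]
      have := Real.sqrt_le_sqrt h1
      rwa [Real.sqrt_sq (norm_nonneg _)] at this
    have hφT : ⟪u T, pr κ y⟫ ≤ ‖u T‖ * ‖pr κ y‖ := real_inner_le_norm _ _
    have hprod : ‖u T‖ * ‖pr κ y‖
        ≤ 2 * κ * L * Real.sqrt (∑ t ∈ Icc 1 T, ω t ^ 2) := by
      have h1 : ‖u T‖ * ‖pr κ y‖
          ≤ Real.sqrt (2 * L ^ 2 * ∑ t ∈ Icc 1 T, ω t ^ 2) * Real.sqrt (2 * κ ^ 2) :=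
        mul_le_mul huT hpnorm (norm_nonneg _) (Real.sqrt_nonneg _)
      have h2 : Real.sqrt (2 * L ^ 2 * ∑ t ∈ Icc 1 T, ω t ^ 2) * Real.sqrt (2 * κ ^ 2)
          = Real.sqrt ((2 * κ * L) ^ 2 * ∑ t ∈ Icc 1 T, ω t ^ 2) := by
        rw [← Real.sqrt_mul (by positivity)]
        congr 1
        ring
      have h3 : Real.sqrt ((2 * κ * L) ^ 2 * ∑ t ∈ Icc 1 T, ω t ^ 2)
          = 2 * κ * L * Real.sqrt (∑ t ∈ Icc 1 T, ω t ^ 2) := by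
        rw [Real.sqrt_mul (sq_nonneg _), Real.sqrt_sq (by positivity)]
      rw [h2, h3] at h1
      exact h1
    have hchain : θ T / ω T * ⟪u T, pr κ y⟫
        ≤ 2 * κ * L * (θ T / ω T) * Real.sqrt (∑ t ∈ Icc 1 T, ω t ^ 2) := by
      have := mul_le_mul_of_nonneg_left (le_trans hφT hprod) hlamnn
      calc θ T / ω T * ⟪u T, pr κ y⟫
          ≤ θ T / ω T * (2 * κ * L * Real.sqrt (∑ t ∈ Icc 1 T, ω t ^ 2)) := this
        _ = 2 * κ * L * (θ T / ω T) * Real.sqrt (∑ t ∈ Icc 1 T, ω t ^ 2) := by ring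
    have hsum_eq : (∑ t ∈ Icc 1 T, θ t * ⟪f t, x t⟫) - (∑ t ∈ Icc 1 T, θ t * ⟪f t, y⟫)
        = ∑ t ∈ Icc 1 T, θ t * (⟪f t, x t⟫ - ⟪f t, y⟫) := by
      rw [← Finset.sum_sub_distrib]
      exact Finset.sum_congr rfl fun t _ => by ring
    rw [hsum_eq]
    linarith
  -- assemble
  have : Nonempty X := hXne.to_subtype
  have hθsum : 0 < ∑ t ∈ Icc 1 T, θ t :=
    Finset.sum_pos (fun t ht => hθ t (mem_Icc.mp ht).1) ⟨1, mem_Icc.mpr ⟨le_refl 1, hT⟩⟩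
  set B := 2 * κ * L * (θ T / ω T) * Real.sqrt (∑ t ∈ Icc 1 T, ω t ^ 2) with hB
  have hnum : (∑ t ∈ Icc 1 T, θ t * ⟪f t, x t⟫)
      - (⨅ xx : X, ∑ t ∈ Icc 1 T, θ t * ⟪f t, (xx : EuclideanSpace ℝ (Fin n))⟫) ≤ B := by
    have hlb : (∑ t ∈ Icc 1 T, θ t * ⟪f t, x t⟫) - B
        ≤ ⨅ xx : X, ∑ t ∈ Icc 1 T, θ t * ⟪f t, (xx : EuclideanSpace ℝ (Fin n))⟫ := by
      refine le_ciInf fun xx => ?_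
      have := key xx xx.2
      linarith
    linarith
  gcongr

end
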